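/- Let T be a tree with vertices x, y, and let X and Y be rooted trees (disjoint from T and each other). Let T' be obtained by identifying the root of X with x and the root of Y with y, and T'' by identifying the root of X with y and the root of Y with x. If f_T(x) > f_T(y) and f_X(root) < f_Y(root), then F(T'') > F(T'). -/

import Mathlib

open SimpleGraph

/-- The number of subtrees of a graph `G`. -/
noncomputable def numSubtrees {V : Type*} [Fintype V] (G : SimpleGraph V) : ℕ :=
  {S : Set V | S.Nonempty ∧ (G.induce S).Connected}.ncard

/-- The number of subtrees of `G` containing the vertex `v`. -/
noncomputable def numSubtreesContaining {V : Type*} [Fintype V] (G : SimpleGraph V) (v : V) : ℕ :=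
  {S : Set V | v ∈ S ∧ (G.induce S).Connected}.ncard

/-- The graph obtained from `T` and the rooted tree `(X, a0)` by identifying the root `a0`
of `X` with the vertex `x` of `T`. -/
def glue {V A : Type*} (T : SimpleGraph V) (x : V) (X : SimpleGraph A) (a0 : A) :
    SimpleGraph (V ⊕ {a : A // a ≠ a0}) :=
  SimpleGraph.fromRel (fun p q =>
    match p, q with
    | Sum.inl v, Sum.inl w => T.Adj v w
    | Sum.inr a, Sum.inr b => X.Adj a.1 b.1
    | Sum.inl v, Sum.inr a => v = x ∧ X.Adj a0 a.1
    | Sum.inr _, Sum.inl _ => False)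

lemma reachable_map_aux {α β : Type*} {G : SimpleGraph α} {H : SimpleGraph β} (f : α → β)
    (hf : ∀ u v, G.Adj u v → f u = f v ∨ H.Adj (f u) (f v)) {u v : α}
    (h : G.Reachable u v) : H.Reachable (f u) (f v) := by
  obtain ⟨p⟩ := h
  induction p with
  | nil => exact Reachable.refl _
  | cons h p ih =>
    rcases hf _ _ h with heq | hadj
    · rw [heq]; exact ih
    · exact hadj.reachable.trans ih

lemma ncard_prod {α β : Type*} (s : Set α) (t : Set β) :
    (s ×ˢ t).ncard = s.ncard * t.ncard := by
  rw [← Nat.card_coe_set_eq, ← Nat.card_coe_set_eq, ← Nat.card_coe_set_eq,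
    ← Nat.card_prod]
  exact Nat.card_congr (Equiv.Set.prod s t)

lemma bijOn_ncard {α β : Type*} {f : α → β} {s : Set α} {t : Set β} (h : Set.BijOn f s t) :
    t.ncard = s.ncard := by
  rw [← h.image_eq]; exact Set.ncard_image_of_injOn h.injOn

noncomputable def numSC2 {V : Type*} [Fintype V] (G : SimpleGraph V) (v w : V) : ℕ :=
  {S : Set V | v ∈ S ∧ w ∈ S ∧ (G.induce S).Connected}.ncard

section GlueLemmas

variable {W A : Type*} {G : SimpleGraph W} {X : SimpleGraph A} {w : W} {a0 : A}

@[simp] lemma glue_adj_inl_inl {u v : W} :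
    (glue G w X a0).Adj (Sum.inl u) (Sum.inl v) ↔ G.Adj u v := by
  simp only [glue, fromRel_adj]
  constructor
  · rintro ⟨-, h | h⟩
    · exact h
    · exact h.symm
  · exact fun h => ⟨by simp [h.ne], Or.inl h⟩

@[simp] lemma glue_adj_inr_inr {a b : {a : A // a ≠ a0}} :
    (glue G w X a0).Adj (Sum.inr a) (Sum.inr b) ↔ X.Adj a.1 b.1 := by
  simp only [glue, fromRel_adj]
  constructor
  · rintro ⟨-, h | h⟩
    · exact h
    · exact h.symm
  · exact fun h => ⟨by simp [Subtype.ext_iff, h.ne], Or.inl h⟩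

@[simp] lemma glue_adj_inl_inr {v : W} {a : {a : A // a ≠ a0}} :
    (glue G w X a0).Adj (Sum.inl v) (Sum.inr a) ↔ v = w ∧ X.Adj a0 a.1 := by
  simp only [glue, fromRel_adj]
  constructor
  · rintro ⟨-, h | h⟩
    · exact h
    · exact h.elim
  · exact fun h => ⟨by simp, Or.inl h⟩

@[simp] lemma glue_adj_inr_inl {v : W} {a : {a : A // a ≠ a0}} :
    (glue G w X a0).Adj (Sum.inr a) (Sum.inl v) ↔ v = w ∧ X.Adj a0 a.1 := by
  rw [adj_comm]; exact glue_adj_inl_inr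

/-- the set of `X`-vertices represented in `S` -/
def rightPart (S : Set (W ⊕ {a : A // a ≠ a0})) : Set A :=
  Subtype.val '' (Sum.inr ⁻¹' S)

lemma mem_rightPart {S : Set (W ⊕ {a : A // a ≠ a0})} {a : A} :
    a ∈ rightPart S ↔ ∃ h : a ≠ a0, Sum.inr ⟨a, h⟩ ∈ S := by
  constructor
  · rintro ⟨b, hb, rfl⟩; exact ⟨b.2, hb⟩
  · rintro ⟨h, hmem⟩; exact ⟨⟨a, h⟩, hmem, rfl⟩

lemma a0_not_mem_rightPart {S : Set (W ⊕ {a : A // a ≠ a0})} : a0 ∉ rightPart S := by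
  rintro ⟨b, -, hb⟩; exact b.2 hb

/-- pure left subtrees -/
lemma connected_induce_left {S : Set (W ⊕ {a : A // a ≠ a0})} (hS : S ⊆ Set.range Sum.inl) :
    ((glue G w X a0).induce S).Connected ↔ (G.induce (Sum.inl ⁻¹' S)).Connected := by
  constructor
  · intro h
    have hne : Nonempty (Sum.inl ⁻¹' S : Set W) := by
      obtain ⟨z⟩ := h.nonempty
      obtain ⟨v, hv⟩ := hS z.2
      exact ⟨⟨v, by rw [Set.mem_preimage, hv]; exact z.2⟩⟩
    rw [connected_iff]
    refine ⟨fun p q => ?_, hne⟩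
    -- lift p q to S
    have hp : (Sum.inl p.1 : W ⊕ {a : A // a ≠ a0}) ∈ S := p.2
    have hq : (Sum.inl q.1 : W ⊕ {a : A // a ≠ a0}) ∈ S := q.2
    have hr := h.preconnected ⟨Sum.inl p.1, hp⟩ ⟨Sum.inl q.1, hq⟩
    have key := reachable_map_aux
      (G := (glue G w X a0).induce S) (H := G.induce (Sum.inl ⁻¹' S))
      (f := fun z => ⟨Sum.elim id (fun _ => w) z.1, by
        obtain ⟨v, hv⟩ := hS z.2
        rw [Set.mem_preimage, ← hv]
        exact hv ▸ z.2⟩)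
      (fun u v huv => by
        obtain ⟨u1 | u1, hu⟩ := u
        · obtain ⟨v1 | v1, hv⟩ := v
          · right
            simp only [comap_adj, Function.Embedding.coe_subtype] at huv ⊢
            simpa using huv
          · exact absurd (hS hv) (by simp)
        · exact absurd (hS hu) (by simp)) hr
    convert key using 2 <;> exact rfl
  · intro h
    have hne : Nonempty S := by
      obtain ⟨z⟩ := h.nonempty
      exact ⟨⟨Sum.inl z.1, z.2⟩⟩
    rw [connected_iff]
    refine ⟨fun p q => ?_, hne⟩
    obtain ⟨vp, hvp⟩ := hS p.2
    obtain ⟨vq, hvq⟩ := hS q.2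
    have hp : vp ∈ Sum.inl ⁻¹' S := by rw [Set.mem_preimage, hvp]; exact p.2
    have hq : vq ∈ Sum.inl ⁻¹' S := by rw [Set.mem_preimage, hvq]; exact q.2
    have hr := h.preconnected ⟨vp, hp⟩ ⟨vq, hq⟩
    have key := reachable_map_aux
      (G := G.induce (Sum.inl ⁻¹' S)) (H := (glue G w X a0).induce S)
      (f := fun z => ⟨Sum.inl z.1, z.2⟩)
      (fun u v huv => by
        right
        simp only [comap_adj, Function.Embedding.coe_subtype] at huv ⊢
        simpa using huv) hr
    convert key using 2
    · exact hvp.symm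
    · exact hvq.symm



/-- pure right subtrees -/
lemma connected_induce_right {S : Set (W ⊕ {a : A // a ≠ a0})} (hS : S ⊆ Set.range Sum.inr) :
    ((glue G w X a0).induce S).Connected ↔ (X.induce (rightPart S)).Connected := by
  constructor
  · intro h
    have hne : Nonempty (rightPart S : Set A) := by
      obtain ⟨z⟩ := h.nonempty
      obtain ⟨b, hb⟩ := hS z.2
      exact ⟨⟨b.1, mem_rightPart.2 ⟨b.2, hb.symm ▸ z.2⟩⟩⟩
    rw [connected_iff]
    refine ⟨fun p q => ?_, hne⟩
    obtain ⟨hp', hpS⟩ := mem_rightPart.1 p.2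
    obtain ⟨hq', hqS⟩ := mem_rightPart.1 q.2
    have hr := h.preconnected ⟨Sum.inr ⟨p.1, hp'⟩, hpS⟩ ⟨Sum.inr ⟨q.1, hq'⟩, hqS⟩
    have key := reachable_map_aux
      (G := (glue G w X a0).induce S) (H := X.induce (rightPart S))
      (f := fun z => ⟨Sum.elim (fun _ => a0) (fun b => b.1) z.1, by
        obtain ⟨b, hb⟩ := hS z.2
        rw [← hb]
        exact mem_rightPart.2 ⟨b.2, hb.symm ▸ z.2⟩⟩)
      (fun u v huv => by
        obtain ⟨u1 | u1, hu⟩ := u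
        · exact absurd (hS hu) (by simp)
        · obtain ⟨v1 | v1, hv⟩ := v
          · exact absurd (hS hv) (by simp)
          · right
            simp only [comap_adj, Function.Embedding.coe_subtype] at huv ⊢
            simpa using huv) hr
    convert key using 2 <;> exact rfl
  · intro h
    have hne : Nonempty S := by
      obtain ⟨z⟩ := h.nonempty
      obtain ⟨hz', hzS⟩ := mem_rightPart.1 z.2
      exact ⟨⟨Sum.inr ⟨z.1, hz'⟩, hzS⟩⟩
    rw [connected_iff]
    refine ⟨fun p q => ?_, hne⟩
    obtain ⟨bp, hbp⟩ := hS p.2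
    obtain ⟨bq, hbq⟩ := hS q.2
    have hp : bp.1 ∈ rightPart S := mem_rightPart.2 ⟨bp.2, hbp.symm ▸ p.2⟩
    have hq : bq.1 ∈ rightPart S := mem_rightPart.2 ⟨bq.2, hbq.symm ▸ q.2⟩
    have hr := h.preconnected ⟨bp.1, hp⟩ ⟨bq.1, hq⟩
    have key := reachable_map_aux
      (G := X.induce (rightPart S)) (H := (glue G w X a0).induce S)
      (f := fun z => ⟨Sum.inr ⟨z.1, (mem_rightPart.1 z.2).1⟩, (mem_rightPart.1 z.2).2⟩)
      (fun u v huv => by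
        right
        simp only [comap_adj, Function.Embedding.coe_subtype] at huv ⊢
        simpa using huv) hr
    convert key using 2
    · exact hbp.symm
    · exact hbq.symm

/-- a connected set meeting both sides contains the glue vertex -/
lemma inl_w_mem_of_connected {S : Set (W ⊕ {a : A // a ≠ a0})}
    (h : ((glue G w X a0).induce S).Connected)
    {u : W} (hu : Sum.inl u ∈ S) {b : {a : A // a ≠ a0}} (hb : Sum.inr b ∈ S) :
    Sum.inl w ∈ S := by
  have hr := h.preconnected ⟨Sum.inr b, hb⟩ ⟨Sum.inl u, hu⟩
  obtain ⟨p⟩ := hr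
  have key : ∀ (c d : S) (p : ((glue G w X a0).induce S).Walk c d),
      (∃ b', c.1 = Sum.inr b') → (∃ u', d.1 = Sum.inl u') → Sum.inl w ∈ S := by
    intro c d p
    induction p with
    | nil =>
      rintro ⟨b', hb'⟩ ⟨u', hu'⟩
      rw [hb'] at hu'
      simp at hu'
    | @cons c r d hadj p ih =>
      rintro ⟨b', hb'⟩ hq
      obtain ⟨rv | rb, hrS⟩ := r
      · -- crossing edge found
        simp only [comap_adj, Function.Embedding.coe_subtype, hb'] at hadj
        rw [glue_adj_inr_inl] at hadj
        rwa [← hadj.1]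
      · exact ih ⟨rb, rfl⟩ hq
  exact key _ _ p ⟨b, rfl⟩ ⟨u, rfl⟩

open Classical in
/-- Lift a vertex of `X` restricted to `insert a0 (rightPart S)` back into `S`. -/
noncomputable def liftA (S : Set (W ⊕ {a : A // a ≠ a0})) (hw : Sum.inl w ∈ S) :
    (insert a0 (rightPart S) : Set A) → S := fun c =>
  if h : c.1 = a0 then ⟨Sum.inl w, hw⟩
  else ⟨Sum.inr ⟨c.1, h⟩, by
    rcases Set.mem_insert_iff.1 c.2 with h' | h'
    · exact absurd h' h
    · exact (mem_rightPart.1 h').2⟩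

lemma liftA_spec {S : Set (W ⊕ {a : A // a ≠ a0})} (hw : Sum.inl w ∈ S)
    (c : (insert a0 (rightPart S) : Set A)) :
    Sum.elim (fun _ => a0) (fun b => b.1) (liftA S hw c).1 = c.1 := by
  by_cases h : c.1 = a0 <;> simp [liftA, h]

lemma liftA_edge {S : Set (W ⊕ {a : A // a ≠ a0})} (hw : Sum.inl w ∈ S)
    (c d : (insert a0 (rightPart S) : Set A))
    (hcd : (X.induce (insert a0 (rightPart S))).Adj c d) :
    ((glue G w X a0).induce S).Adj (liftA S hw c) (liftA S hw d) := by
  simp only [comap_adj, Function.Embedding.coe_subtype] at hcd ⊢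
  by_cases hc : c.1 = a0 <;> by_cases hd : d.1 = a0
  · exact absurd (hc ▸ hd ▸ hcd) X.irrefl
  · simp only [liftA, hc, hd, dif_pos, dif_neg, not_false_iff]
    rw [glue_adj_inl_inr]
    exact ⟨rfl, by have h2 := hcd; rw [hc] at h2; exact h2⟩
  · simp only [liftA, hc, hd, dif_pos, dif_neg, not_false_iff]
    rw [glue_adj_inr_inl]
    exact ⟨rfl, by have h2 := hcd.symm; rw [hd] at h2; exact h2⟩
  · simp only [liftA, hc, hd, dif_neg, not_false_iff]
    rw [glue_adj_inr_inr]
    exact hcd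

/-- mixed subtrees: connectivity decomposes at the glue vertex -/
lemma connected_induce_mixed {S : Set (W ⊕ {a : A // a ≠ a0})} (hw : Sum.inl w ∈ S) :
    ((glue G w X a0).induce S).Connected ↔
      (G.induce (Sum.inl ⁻¹' S)).Connected ∧
        (X.induce (insert a0 (rightPart S))).Connected := by
  constructor
  · intro h
    constructor
    · rw [connected_iff]
      refine ⟨fun p q => ?_, ⟨⟨w, hw⟩⟩⟩
      have hr := h.preconnected ⟨Sum.inl p.1, p.2⟩ ⟨Sum.inl q.1, q.2⟩
      have key := reachable_map_aux
        (G := (glue G w X a0).induce S) (H := G.induce (Sum.inl ⁻¹' S))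
        (f := fun z => ⟨Sum.elim id (fun _ => w) z.1, by
          rcases z with ⟨v | b, hz⟩
          · exact hz
          · exact hw⟩)
        (fun u v huv => by
          simp only [comap_adj, Function.Embedding.coe_subtype] at huv
          obtain ⟨u1 | u1, hu⟩ := u <;> obtain ⟨v1 | v1, hv⟩ := v
          · right
            simp only [comap_adj, Function.Embedding.coe_subtype]
            simpa using huv
          · rw [glue_adj_inl_inr] at huv
            exact Or.inl (Subtype.ext (by simp [huv.1]))
          · rw [glue_adj_inr_inl] at huv
            exact Or.inl (Subtype.ext (by simp [huv.1]))
          · exact Or.inl (Subtype.ext (by simp))) hr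
      convert key using 2 <;> exact rfl
    · rw [connected_iff]
      refine ⟨fun c d => ?_, ⟨⟨a0, Set.mem_insert _ _⟩⟩⟩
      have hr := h.preconnected (liftA S hw c) (liftA S hw d)
      have key := reachable_map_aux
        (G := (glue G w X a0).induce S) (H := X.induce (insert a0 (rightPart S)))
        (f := fun z => ⟨Sum.elim (fun _ => a0) (fun b => b.1) z.1, by
          rcases z with ⟨v | b, hz⟩
          · exact Set.mem_insert _ _
          · exact Set.mem_insert_of_mem _ (mem_rightPart.2 ⟨b.2, hz⟩)⟩)
        (fun u v huv => by
          simp only [comap_adj, Function.Embedding.coe_subtype] at huv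
          obtain ⟨u1 | u1, hu⟩ := u <;> obtain ⟨v1 | v1, hv⟩ := v
          · exact Or.inl (Subtype.ext (by simp))
          · rw [glue_adj_inl_inr] at huv
            right
            simp only [comap_adj, Function.Embedding.coe_subtype]
            simpa using huv.2
          · rw [glue_adj_inr_inl] at huv
            right
            simp only [comap_adj, Function.Embedding.coe_subtype]
            simpa using huv.2.symm
          · right
            simp only [comap_adj, Function.Embedding.coe_subtype]
            rw [glue_adj_inr_inr] at huv
            simpa using huv) hr
      convert key using 2
      · exact (liftA_spec hw c).symm
      · exact (liftA_spec hw d).symm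
  · rintro ⟨hL, hR⟩
    rw [connected_iff]
    refine ⟨fun p q => ?_, ⟨⟨Sum.inl w, hw⟩⟩⟩
    have hto : ∀ p : S, ((glue G w X a0).induce S).Reachable p ⟨Sum.inl w, hw⟩ := by
      rintro ⟨v | b, hp⟩
      · have hr := hL.preconnected ⟨v, hp⟩ ⟨w, hw⟩
        have key := reachable_map_aux
          (G := G.induce (Sum.inl ⁻¹' S)) (H := (glue G w X a0).induce S)
          (f := fun z => ⟨Sum.inl z.1, z.2⟩)
          (fun u v huv => by
            right
            simp only [comap_adj, Function.Embedding.coe_subtype] at huv ⊢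
            simpa using huv) hr
        exact key
      · have hb1 : b.1 ∈ insert a0 (rightPart S) :=
          Set.mem_insert_of_mem _ (mem_rightPart.2 ⟨b.2, hp⟩)
        have hr := hR.preconnected ⟨b.1, hb1⟩ ⟨a0, Set.mem_insert _ _⟩
        have key := reachable_map_aux (H := (glue G w X a0).induce S) (liftA S hw)
          (fun u v huv => Or.inr (liftA_edge (G := G) hw u v huv)) hr
        have e1 : liftA S hw ⟨b.1, hb1⟩ = ⟨Sum.inr b, hp⟩ := Subtype.ext (by simp [liftA, b.2])
        have e2 : liftA S hw ⟨a0, Set.mem_insert _ _⟩ = ⟨Sum.inl w, hw⟩ :=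
          Subtype.ext (by simp [liftA])
        rw [e1, e2] at key
        exact key
    exact (hto p).trans (hto q).symm

lemma connected_induce_singleton (X : SimpleGraph A) (a : A) :
    (X.induce {a}).Connected := by
  rw [connected_iff]
  refine ⟨fun p q => ?_, ⟨⟨a, rfl⟩⟩⟩
  have : p = q := Subtype.ext ((p.2 : p.1 ∈ ({a} : Set A)).trans
    ((q.2 : q.1 ∈ ({a} : Set A))).symm)
  rw [this]

/-- generic bijection for pure-left subtree families -/
lemma bijOn_inl (φ : Set W → Prop) :
    Set.BijOn (fun S => Sum.inl '' S : Set W → Set (W ⊕ {a : A // a ≠ a0}))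
      {S : Set W | φ S ∧ (G.induce S).Connected}
      {S : Set (W ⊕ {a : A // a ≠ a0}) | φ (Sum.inl ⁻¹' S) ∧
        ((glue G w X a0).induce S).Connected ∧ S ⊆ Set.range Sum.inl} := by
  refine ⟨?_, ?_, ?_⟩
  · rintro S ⟨h1, h2⟩
    have hpre : Sum.inl ⁻¹' (Sum.inl '' S) = S :=
      Set.preimage_image_eq (f := (Sum.inl : W → W ⊕ {a : A // a ≠ a0})) S Sum.inl_injective
    refine ⟨(show φ (Sum.inl ⁻¹' (Sum.inl '' S)) by rw [hpre]; exact h1), ?_, Set.image_subset_range _ _⟩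
    rw [connected_induce_left (Set.image_subset_range _ _), hpre]
    exact h2
  · exact (Set.image_injective.2 Sum.inl_injective).injOn
  · rintro S ⟨h1, h2, h3⟩
    exact ⟨Sum.inl ⁻¹' S, ⟨h1, (connected_induce_left h3).1 h2⟩,
      Set.image_preimage_eq_of_subset h3⟩

/-- the map realizing subsets of `A` as pure-right subsets -/
def rightEmbed (a0 : A) (R : Set A) : Set (W ⊕ {a : A // a ≠ a0}) :=
  Sum.inr '' {b : {a : A // a ≠ a0} | b.1 ∈ R}

lemma rightPart_rightEmbed (R : Set A) : rightPart (rightEmbed (W := W) a0 R) = R \ {a0} := by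
  ext a
  simp only [rightPart, rightEmbed, Set.mem_image, Set.mem_preimage, Set.mem_diff,
    Set.mem_singleton_iff]
  constructor
  · rintro ⟨b, hb, rfl⟩
    obtain ⟨c, hc, hcb⟩ := hb
    rw [Sum.inr.injEq] at hcb
    exact ⟨hcb ▸ hc, b.2⟩
  · rintro ⟨h1, h2⟩
    exact ⟨⟨a, h2⟩, ⟨⟨a, h2⟩, h1, rfl⟩, rfl⟩

lemma rightEmbed_rightPart {S : Set (W ⊕ {a : A // a ≠ a0})} (hS : S ⊆ Set.range Sum.inr) :
    rightEmbed a0 (rightPart S) = S := by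
  ext z
  cases z with
  | inl v =>
    simp only [rightEmbed, Set.mem_image]
    constructor
    · rintro ⟨b, -, h⟩; exact absurd h (by simp)
    · intro h; exact absurd (hS h) (by simp)
  | inr b =>
    simp only [rightEmbed, Set.mem_image]
    constructor
    · rintro ⟨c, hc, hcb⟩
      obtain ⟨h1, h2⟩ := mem_rightPart.1 hc
      rw [Sum.inr.injEq] at hcb
      rw [← hcb]
      exact h2
    · intro h
      exact ⟨b, mem_rightPart.2 ⟨b.2, h⟩, rfl⟩

lemma bijOn_inr :
    Set.BijOn (rightEmbed (W := W) a0)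
      {R : Set A | R.Nonempty ∧ (X.induce R).Connected ∧ a0 ∉ R}
      {S : Set (W ⊕ {a : A // a ≠ a0}) | S.Nonempty ∧
        ((glue G w X a0).induce S).Connected ∧ S ⊆ Set.range Sum.inr} := by
  refine ⟨?_, ?_, ?_⟩
  · rintro R ⟨⟨a, ha⟩, h2, h3⟩
    have hsub : rightEmbed (W := W) a0 R ⊆ Set.range Sum.inr := by
      rintro z ⟨b, -, rfl⟩; exact ⟨b, rfl⟩
    have hrp : rightPart (rightEmbed (W := W) a0 R) = R := by
      rw [rightPart_rightEmbed, Set.diff_singleton_eq_self h3]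
    refine ⟨⟨Sum.inr ⟨a, fun h => h3 (h ▸ ha)⟩, ⟨_, ha, rfl⟩⟩, ?_, hsub⟩
    rw [connected_induce_right hsub, hrp]
    exact h2
  · intro R hR R' hR' hEq
    have : rightPart (rightEmbed (W := W) a0 R) = rightPart (rightEmbed (W := W) a0 R') := by
      rw [hEq]
    rwa [rightPart_rightEmbed, rightPart_rightEmbed, Set.diff_singleton_eq_self hR.2.2,
      Set.diff_singleton_eq_self hR'.2.2] at this
  · rintro S ⟨⟨z, hz⟩, h2, h3⟩
    refine ⟨rightPart S, ⟨?_, (connected_induce_right h3).1 h2, a0_not_mem_rightPart⟩,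
      rightEmbed_rightPart h3⟩
    obtain ⟨b, rfl⟩ := h3 hz
    exact ⟨b.1, mem_rightPart.2 ⟨b.2, hz⟩⟩

/-- the map realizing mixed subtrees from pairs -/
def mixedEmbed (a0 : A) (p : Set W × Set A) : Set (W ⊕ {a : A // a ≠ a0}) :=
  Sum.inl '' p.1 ∪ Sum.inr '' {b : {a : A // a ≠ a0} | b.1 ∈ p.2}

lemma preimage_mixedEmbed (p : Set W × Set A) :
    Sum.inl ⁻¹' (mixedEmbed a0 p) = p.1 := by
  ext v
  simp [mixedEmbed]

lemma rightPart_mixedEmbed (p : Set W × Set A) :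
    rightPart (mixedEmbed (W := W) a0 p) = p.2 \ {a0} := by
  ext a
  simp only [rightPart, mixedEmbed, Set.mem_image, Set.mem_preimage, Set.mem_union,
    Set.mem_diff, Set.mem_singleton_iff]
  constructor
  · rintro ⟨b, hb, rfl⟩
    rcases hb with ⟨v, -, h⟩ | ⟨c, hc, hcb⟩
    · exact absurd h (by simp)
    · rw [Sum.inr.injEq] at hcb
      exact ⟨hcb ▸ hc, b.2⟩
  · rintro ⟨h1, h2⟩
    exact ⟨⟨a, h2⟩, Or.inr ⟨⟨a, h2⟩, h1, rfl⟩, rfl⟩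

lemma bijOn_mixed (φ : Set W → Prop) :
    Set.BijOn (mixedEmbed (W := W) a0)
      (({S : Set W | w ∈ S ∧ φ S ∧ (G.induce S).Connected}) ×ˢ
        ({R : Set A | a0 ∈ R ∧ (X.induce R).Connected} \ {{a0}}))
      {S : Set (W ⊕ {a : A // a ≠ a0}) | Sum.inl w ∈ S ∧ φ (Sum.inl ⁻¹' S) ∧
        (∃ b, Sum.inr b ∈ S) ∧ ((glue G w X a0).induce S).Connected} := by
  constructor
  · rintro ⟨S, R⟩ ⟨⟨hw, hφ, hconn⟩, ⟨ha0, hRconn⟩, hne⟩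
    have hwmem : Sum.inl w ∈ mixedEmbed (W := W) a0 (S, R) :=
      Or.inl (Set.mem_image_of_mem _ hw)
    have hins : insert a0 (rightPart (mixedEmbed (W := W) a0 (S, R))) = R := by
      rw [rightPart_mixedEmbed, Set.insert_diff_singleton, Set.insert_eq_self.2 ha0]
    refine ⟨hwmem, by rw [preimage_mixedEmbed]; exact hφ, ?_, ?_⟩
    · -- R has an element other than a0
      have : ∃ a ∈ R, a ≠ a0 := by
        by_contra hcon
        push_neg at hcon
        apply hne
        simp only [Set.mem_singleton_iff]
        ext a
        simp only [Set.mem_singleton_iff]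
        exact ⟨fun h => hcon a h, fun h => h ▸ ha0⟩
      obtain ⟨a, haR, hane⟩ := this
      exact ⟨⟨a, hane⟩, Or.inr ⟨⟨a, hane⟩, haR, rfl⟩⟩
    · rw [connected_induce_mixed hwmem, preimage_mixedEmbed, hins]
      exact ⟨hconn, hRconn⟩
  constructor
  · rintro ⟨S, R⟩ ⟨⟨hw, -, -⟩, ⟨ha0, -⟩, -⟩ ⟨S', R'⟩ ⟨⟨hw', -, -⟩, ⟨ha0', -⟩, -⟩ hEq
    have h1 : S = S' := by
      have h := congrArg (fun t => Sum.inl ⁻¹' t) hEq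
      rwa [preimage_mixedEmbed, preimage_mixedEmbed] at h
    have h2 : R = R' := by
      have e1 : insert a0 (rightPart (mixedEmbed (W := W) a0 (S, R))) = R := by
        rw [rightPart_mixedEmbed, Set.insert_diff_singleton, Set.insert_eq_self.2 ha0]
      have e2 : insert a0 (rightPart (mixedEmbed (W := W) a0 (S', R'))) = R' := by
        rw [rightPart_mixedEmbed, Set.insert_diff_singleton, Set.insert_eq_self.2 ha0']
      have h := congrArg (fun t => insert a0 (rightPart t)) hEq
      rwa [e1, e2] at h
    rw [Prod.ext_iff]
    exact ⟨h1, h2⟩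
  · rintro S ⟨hw, hφ, ⟨b, hb⟩, hconn⟩
    have hmix := (connected_induce_mixed hw).1 hconn
    refine ⟨(Sum.inl ⁻¹' S, insert a0 (rightPart S)), ⟨⟨hw, hφ, hmix.1⟩,
      ⟨Set.mem_insert _ _, hmix.2⟩, ?_⟩, ?_⟩
    · -- insert a0 (rightPart S) ≠ {a0}
      simp only [Set.mem_singleton_iff]
      intro hcon
      have : b.1 ∈ insert a0 (rightPart S) :=
        Set.mem_insert_of_mem _ (mem_rightPart.2 ⟨b.2, hb⟩)
      rw [hcon, Set.mem_singleton_iff] at this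
      exact b.2 this
    · -- mixedEmbed recovers S
      ext z
      cases z with
      | inl v =>
        simp only [mixedEmbed, Set.mem_union, Set.mem_image]
        constructor
        · rintro (⟨u, hu, huv⟩ | ⟨c, -, h⟩)
          · rw [Sum.inl.injEq] at huv; exact huv ▸ hu
          · exact absurd h (by simp)
        · intro h; exact Or.inl ⟨v, h, rfl⟩
      | inr c =>
        simp only [mixedEmbed, Set.mem_union, Set.mem_image]
        constructor
        · rintro (⟨u, -, h⟩ | ⟨d, hd, hdc⟩)
          · exact absurd h (by simp)
          · rw [Sum.inr.injEq] at hdc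
            rcases Set.mem_insert_iff.1 hd with h' | h'
            · exact absurd (hdc ▸ h' : c.1 = a0) c.2
            · obtain ⟨h1, h2⟩ := mem_rightPart.1 h'
              rwa [show c = ⟨d.1, h1⟩ from hdc ▸ Subtype.ext rfl]
        · intro h
          exact Or.inr ⟨c, Set.mem_insert_of_mem _ (mem_rightPart.2 ⟨c.2, h⟩), rfl⟩

section Counting

variable [Fintype W] [Fintype A] [DecidableEq A]

lemma singleton_mem_STc : ({a0} : Set A) ∈ {R : Set A | a0 ∈ R ∧ (X.induce R).Connected} :=
  ⟨rfl, connected_induce_singleton X a0⟩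

lemma one_le_cX : 1 ≤ numSubtreesContaining X a0 := by
  rw [numSubtreesContaining]
  exact (Set.ncard_pos (Set.toFinite _)).2 ⟨{a0}, singleton_mem_STc⟩

lemma pure_left_count (φ : Set W → Prop) :
    {S : Set (W ⊕ {a : A // a ≠ a0}) | φ (Sum.inl ⁻¹' S) ∧
        ((glue G w X a0).induce S).Connected ∧ S ⊆ Set.range Sum.inl}.ncard
      = {S : Set W | φ S ∧ (G.induce S).Connected}.ncard :=
  bijOn_ncard (bijOn_inl φ)

lemma pure_right_count :
    {S : Set (W ⊕ {a : A // a ≠ a0}) | S.Nonempty ∧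
        ((glue G w X a0).induce S).Connected ∧ S ⊆ Set.range Sum.inr}.ncard
      + numSubtreesContaining X a0 = numSubtrees X := by
  rw [bijOn_ncard (bijOn_inr (G := G) (w := w))]
  have hsplit : {S : Set A | S.Nonempty ∧ (X.induce S).Connected} =
      {R : Set A | R.Nonempty ∧ (X.induce R).Connected ∧ a0 ∉ R} ∪
        {R : Set A | a0 ∈ R ∧ (X.induce R).Connected} := by
    ext R
    constructor
    · rintro ⟨h1, h2⟩
      by_cases h : a0 ∈ R
      · exact Or.inr ⟨h, h2⟩
      · exact Or.inl ⟨h1, h2, h⟩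
    · rintro (⟨h1, h2, h3⟩ | ⟨h1, h2⟩)
      · exact ⟨h1, h2⟩
      · exact ⟨⟨a0, h1⟩, h2⟩
  have hdisj : Disjoint {R : Set A | R.Nonempty ∧ (X.induce R).Connected ∧ a0 ∉ R}
      {R : Set A | a0 ∈ R ∧ (X.induce R).Connected} :=
    Set.disjoint_left.2 fun R h1 h2 => h1.2.2 h2.1
  rw [numSubtrees, hsplit, Set.ncard_union_eq hdisj (Set.toFinite _) (Set.toFinite _)]
  rfl

lemma mixed_count (φ : Set W → Prop) :
    {S : Set (W ⊕ {a : A // a ≠ a0}) | Sum.inl w ∈ S ∧ φ (Sum.inl ⁻¹' S) ∧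
        (∃ b, Sum.inr b ∈ S) ∧ ((glue G w X a0).induce S).Connected}.ncard
      + {S : Set W | w ∈ S ∧ φ S ∧ (G.induce S).Connected}.ncard
    = {S : Set W | w ∈ S ∧ φ S ∧ (G.induce S).Connected}.ncard
        * numSubtreesContaining X a0 := by
  rw [bijOn_ncard (bijOn_mixed (G := G) φ), ncard_prod]
  have h2 : ({R : Set A | a0 ∈ R ∧ (X.induce R).Connected} \ {({a0} : Set A)}).ncard
      = numSubtreesContaining X a0 - 1 :=
    Set.ncard_diff_singleton_of_mem singleton_mem_STc
  rw [h2]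
  have h3 : 1 ≤ numSubtreesContaining X a0 := one_le_cX
  obtain ⟨k, hk⟩ := Nat.exists_eq_add_of_le h3
  rw [hk]
  have : 1 + k - 1 = k := by omega
  rw [this]
  ring

lemma glue_numSubtrees :
    numSubtrees (glue G w X a0) + numSubtreesContaining X a0 + numSubtreesContaining G w
      = numSubtrees G + numSubtrees X
        + numSubtreesContaining G w * numSubtreesContaining X a0 := by
  have hpart : {S : Set (W ⊕ {a : A // a ≠ a0}) | S.Nonempty ∧
      ((glue G w X a0).induce S).Connected} =
      ({S : Set (W ⊕ {a : A // a ≠ a0}) | (Sum.inl ⁻¹' S).Nonempty ∧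
          ((glue G w X a0).induce S).Connected ∧ S ⊆ Set.range Sum.inl} ∪
        {S : Set (W ⊕ {a : A // a ≠ a0}) | S.Nonempty ∧
          ((glue G w X a0).induce S).Connected ∧ S ⊆ Set.range Sum.inr}) ∪
      {S : Set (W ⊕ {a : A // a ≠ a0}) | Sum.inl w ∈ S ∧ (Sum.inl ⁻¹' S).Nonempty ∧
        (∃ b, Sum.inr b ∈ S) ∧ ((glue G w X a0).induce S).Connected} := by
    ext S
    constructor
    · rintro ⟨h1, h2⟩
      by_cases hl : S ⊆ Set.range Sum.inl
      · obtain ⟨z, hz⟩ := h1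
        obtain ⟨v, rfl⟩ := hl hz
        exact Or.inl (Or.inl ⟨⟨v, hz⟩, h2, hl⟩)
      · by_cases hr : S ⊆ Set.range Sum.inr
        · exact Or.inl (Or.inr ⟨h1, h2, hr⟩)
        · obtain ⟨z, hz, hzn⟩ := Set.not_subset.1 hl
          obtain ⟨u', hu', hun⟩ := Set.not_subset.1 hr
          cases z with
          | inl v => exact absurd ⟨v, rfl⟩ hzn
          | inr b =>
            cases u' with
            | inr c => exact absurd ⟨c, rfl⟩ hun
            | inl u =>
              have hwS := inl_w_mem_of_connected h2 hu' hz
              exact Or.inr ⟨hwS, ⟨w, hwS⟩, ⟨b, hz⟩, h2⟩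
    · rintro ((⟨⟨v, hv⟩, h2, h3⟩ | ⟨h1, h2, h3⟩) | ⟨hw, h1, h2, h3⟩)
      · exact ⟨⟨Sum.inl v, hv⟩, h2⟩
      · exact ⟨h1, h2⟩
      · exact ⟨⟨Sum.inl w, hw⟩, h3⟩
  have hd12 : Disjoint
      {S : Set (W ⊕ {a : A // a ≠ a0}) | (Sum.inl ⁻¹' S).Nonempty ∧
        ((glue G w X a0).induce S).Connected ∧ S ⊆ Set.range Sum.inl}
      {S : Set (W ⊕ {a : A // a ≠ a0}) | S.Nonempty ∧
        ((glue G w X a0).induce S).Connected ∧ S ⊆ Set.range Sum.inr} :=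
    Set.disjoint_left.2 fun S h1 h2 => by
      obtain ⟨v, hv⟩ := h1.1
      obtain ⟨c, hc⟩ := h2.2.2 hv
      simp at hc
  have hd3 : Disjoint
      ({S : Set (W ⊕ {a : A // a ≠ a0}) | (Sum.inl ⁻¹' S).Nonempty ∧
          ((glue G w X a0).induce S).Connected ∧ S ⊆ Set.range Sum.inl} ∪
        {S : Set (W ⊕ {a : A // a ≠ a0}) | S.Nonempty ∧
          ((glue G w X a0).induce S).Connected ∧ S ⊆ Set.range Sum.inr})
      {S : Set (W ⊕ {a : A // a ≠ a0}) | Sum.inl w ∈ S ∧ (Sum.inl ⁻¹' S).Nonempty ∧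
        (∃ b, Sum.inr b ∈ S) ∧ ((glue G w X a0).induce S).Connected} :=
    Set.disjoint_left.2 fun S h h3 => by
      obtain ⟨b, hb⟩ := h3.2.2.1
      rcases h with h1 | h2
      · obtain ⟨c, hc⟩ := h1.2.2 hb
        simp at hc
      · obtain ⟨c, hc⟩ := h2.2.2 h3.1
        simp at hc
  have e1 : {S : Set (W ⊕ {a : A // a ≠ a0}) | (Sum.inl ⁻¹' S).Nonempty ∧
      ((glue G w X a0).induce S).Connected ∧ S ⊆ Set.range Sum.inl}.ncard = numSubtrees G := by
    rw [numSubtrees]; exact pure_left_count _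
  have e2 := pure_right_count (G := G) (w := w) (X := X) (a0 := a0)
  have e3 : {S : Set (W ⊕ {a : A // a ≠ a0}) | Sum.inl w ∈ S ∧ (Sum.inl ⁻¹' S).Nonempty ∧
      (∃ b, Sum.inr b ∈ S) ∧ ((glue G w X a0).induce S).Connected}.ncard
      + numSubtreesContaining G w
      = numSubtreesContaining G w * numSubtreesContaining X a0 := by
    have h := mixed_count (G := G) (X := X) (a0 := a0) (w := w) (fun S => S.Nonempty)
    have hset : {S : Set W | w ∈ S ∧ S.Nonempty ∧ (G.induce S).Connected} =
        {S : Set W | w ∈ S ∧ (G.induce S).Connected} := by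
      ext S
      exact ⟨fun h => ⟨h.1, h.2.2⟩, fun h => ⟨h.1, ⟨w, h.1⟩, h.2⟩⟩
    rw [hset] at h
    rw [numSubtreesContaining]
    exact h
  rw [numSubtrees, hpart, Set.ncard_union_eq hd3 (Set.toFinite _) (Set.toFinite _),
    Set.ncard_union_eq hd12 (Set.toFinite _) (Set.toFinite _), e1]
  omega

lemma glue_numSubtreesContaining (v : W) :
    numSubtreesContaining (glue G w X a0) (Sum.inl v) + numSC2 G v w
      = numSubtreesContaining G v + numSC2 G v w * numSubtreesContaining X a0 := by
  have hpart : {S : Set (W ⊕ {a : A // a ≠ a0}) | Sum.inl v ∈ S ∧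
      ((glue G w X a0).induce S).Connected} =
      {S : Set (W ⊕ {a : A // a ≠ a0}) | v ∈ Sum.inl ⁻¹' S ∧
          ((glue G w X a0).induce S).Connected ∧ S ⊆ Set.range Sum.inl} ∪
      {S : Set (W ⊕ {a : A // a ≠ a0}) | Sum.inl w ∈ S ∧ v ∈ Sum.inl ⁻¹' S ∧
        (∃ b, Sum.inr b ∈ S) ∧ ((glue G w X a0).induce S).Connected} := by
    ext S
    constructor
    · rintro ⟨h1, h2⟩
      by_cases hl : S ⊆ Set.range Sum.inl
      · exact Or.inl ⟨h1, h2, hl⟩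
      · obtain ⟨z, hz, hzn⟩ := Set.not_subset.1 hl
        cases z with
        | inl u => exact absurd ⟨u, rfl⟩ hzn
        | inr b =>
          have hwS := inl_w_mem_of_connected h2 h1 hz
          exact Or.inr ⟨hwS, h1, ⟨b, hz⟩, h2⟩
    · rintro (⟨h1, h2, h3⟩ | ⟨hw, h1, h2, h3⟩)
      · exact ⟨h1, h2⟩
      · exact ⟨h1, h3⟩
  have hd : Disjoint
      {S : Set (W ⊕ {a : A // a ≠ a0}) | v ∈ Sum.inl ⁻¹' S ∧
          ((glue G w X a0).induce S).Connected ∧ S ⊆ Set.range Sum.inl}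
      {S : Set (W ⊕ {a : A // a ≠ a0}) | Sum.inl w ∈ S ∧ v ∈ Sum.inl ⁻¹' S ∧
        (∃ b, Sum.inr b ∈ S) ∧ ((glue G w X a0).induce S).Connected} :=
    Set.disjoint_left.2 fun S h1 h2 => by
      obtain ⟨b, hb⟩ := h2.2.2.1
      obtain ⟨c, hc⟩ := h1.2.2 hb
      simp at hc
  have e1 : {S : Set (W ⊕ {a : A // a ≠ a0}) | v ∈ Sum.inl ⁻¹' S ∧
      ((glue G w X a0).induce S).Connected ∧ S ⊆ Set.range Sum.inl}.ncard
      = numSubtreesContaining G v := by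
    rw [numSubtreesContaining]; exact pure_left_count (fun S => v ∈ S)
  have e3 : {S : Set (W ⊕ {a : A // a ≠ a0}) | Sum.inl w ∈ S ∧ v ∈ Sum.inl ⁻¹' S ∧
      (∃ b, Sum.inr b ∈ S) ∧ ((glue G w X a0).induce S).Connected}.ncard
      + numSC2 G v w = numSC2 G v w * numSubtreesContaining X a0 := by
    have h := mixed_count (G := G) (X := X) (a0 := a0) (w := w) (fun S => v ∈ S)
    have hset : {S : Set W | w ∈ S ∧ v ∈ S ∧ (G.induce S).Connected} =
        {S : Set W | v ∈ S ∧ w ∈ S ∧ (G.induce S).Connected} := by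
      ext S
      exact ⟨fun h => ⟨h.2.1, h.1, h.2.2⟩, fun h => ⟨h.2.1, h.1, h.2.2⟩⟩
    rw [hset] at h
    rw [numSC2]
    exact h
  rw [numSubtreesContaining, hpart, Set.ncard_union_eq hd (Set.toFinite _) (Set.toFinite _), e1]
  omega

lemma numSC2_comm (v w : W) : numSC2 G v w = numSC2 G w v := by
  rw [numSC2, numSC2]
  congr 1
  ext S
  exact ⟨fun h => ⟨h.2.1, h.1, h.2.2⟩, fun h => ⟨h.2.1, h.1, h.2.2⟩⟩

end Counting

end GlueLemmas

/-- `T'` glues `X` at `x` and `Y` at `y`; `T''` glues `X` at `y` and `Y` at `x`.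
If `f_T(x) > f_T(y)` and `f_X(a0) < f_Y(b0)` then `F(T'') > F(T')`. -/
theorem switch_subtrees_compare {V A B : Type*} [Fintype V] [Fintype A] [Fintype B]
    [DecidableEq A] [DecidableEq B]
    (T : SimpleGraph V) (X : SimpleGraph A) (Y : SimpleGraph B) (a0 : A) (b0 : B)
    (hT : T.IsTree) (hX : X.IsTree) (hY : Y.IsTree)
    (x y : V) (hxy : x ≠ y)
    (hfT : numSubtreesContaining T y < numSubtreesContaining T x)
    (hfXY : numSubtreesContaining X a0 < numSubtreesContaining Y b0) :
    numSubtrees (glue (glue T x X a0) (Sum.inl y) Y b0) <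
      numSubtrees (glue (glue T y X a0) (Sum.inl x) Y b0) := by
  have E1 := glue_numSubtrees (G := glue T x X a0) (w := Sum.inl y) (X := Y) (a0 := b0)
  have E2 := glue_numSubtrees (G := glue T y X a0) (w := Sum.inl x) (X := Y) (a0 := b0)
  have E3 := glue_numSubtrees (G := T) (w := x) (X := X) (a0 := a0)
  have E4 := glue_numSubtrees (G := T) (w := y) (X := X) (a0 := a0)
  have E5 := glue_numSubtreesContaining (G := T) (w := x) (X := X) (a0 := a0) y
  have E6 := glue_numSubtreesContaining (G := T) (w := y) (X := X) (a0 := a0) x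
  have E7 : numSC2 T y x = numSC2 T x y := numSC2_comm (G := T) y x
  rw [E7] at E5
  -- pass to integers
  zify at E1 E2 E3 E4 E5 E6 hfT hfXY ⊢
  set F' := (numSubtrees (glue (glue T x X a0) (Sum.inl y) Y b0) : ℤ)
  set F'' := (numSubtrees (glue (glue T y X a0) (Sum.inl x) Y b0) : ℤ)
  set g1 := (numSubtrees (glue T x X a0) : ℤ)
  set g2 := (numSubtrees (glue T y X a0) : ℤ)
  set c1 := (numSubtreesContaining (glue T x X a0) (Sum.inl y) : ℤ)
  set c2 := (numSubtreesContaining (glue T y X a0) (Sum.inl x) : ℤ)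
  set tx := (numSubtreesContaining T x : ℤ)
  set ty := (numSubtreesContaining T y : ℤ)
  set cX := (numSubtreesContaining X a0 : ℤ)
  set cY := (numSubtreesContaining Y b0 : ℤ)
  set d := (numSC2 T x y : ℤ)
  have key : F'' - F' = (tx - ty) * (cY - cX) := by
    linear_combination E2 - E1 + E4 - E3 + (cY - 1) * E6 - (cY - 1) * E5
  nlinarith [mul_pos (by linarith : (0:ℤ) < tx - ty) (by linarith : (0:ℤ) < cY - cX)]
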